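/- (Generalized Newton–Leibniz formula) For any u ∈ Cⁿ on the n-rectangle P with bottom corner x and top corner x', u(x') − u(x) = Σ_{k=1}^{n} Σ_{1≤i_1<...<i_k≤n} ∫_{P_{i_1...i_k}} ∂^k u/∂x_{i_1}⋯∂x_{i_k} dη_{i_1}⋯dη_{i_k}, where P_{i_1...i_k} is the k-dimensional face of P containing x spanned by directions i_1,...,i_k. -/

import Mathlib

open MeasureTheory Finset

/-- The `k`-dimensional face integral `∫_{P_{i_1...i_k}} ∂^k u/∂x_{i_1}⋯∂x_{i_k}`:
for a set `S` of coordinate directions, the integral of `D S` (the mixed partial of `u`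
over the directions in `S`) over the face of the rectangle `[x, x']` spanned by the
directions in `S`, with all other coordinates frozen at their values in `x`. -/
noncomputable def faceIntegral {n : ℕ} (x x' : Fin n → ℝ)
    (D : Finset (Fin n) → (Fin n → ℝ) → ℝ) (S : Finset (Fin n)) : ℝ :=
  ∫ η : (↥S → ℝ) in Set.univ.pi (fun i : ↥S => Set.Icc (x i) (x' i)),
    D S (fun j => if h : j ∈ S then η ⟨j, h⟩ else x j)

section NLAux
open Function

variable {n : ℕ}

lemma updateFinset_mem_pi {x x' z : Fin n → ℝ} (hz : ∀ i, z i ∈ Set.Icc (x i) (x' i))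
    {S : Finset (Fin n)} {y : ↥S → ℝ}
    (hy : y ∈ Set.univ.pi fun i : ↥S => Set.Icc (x i) (x' i)) (i : Fin n) :
    updateFinset z S y i ∈ Set.Icc (x i) (x' i) := by
  simp only [updateFinset]
  split
  next h => exact hy ⟨i, h⟩ (Set.mem_univ _)
  next h => exact hz i

lemma continuous_updateFinset_comp {α : Type*} [TopologicalSpace α] {B : Finset (Fin n)}
    {w : α → (Fin n → ℝ)} {y : α → (↥B → ℝ)} (hw : Continuous w) (hy : Continuous y) :
    Continuous fun a => updateFinset (w a) B (y a) := by
  refine continuous_pi fun i => ?_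
  simp only [updateFinset]
  by_cases h : i ∈ B
  · simp only [dif_pos h]
    exact (continuous_apply _).comp hy
  · simp only [dif_neg h]
    exact (continuous_apply i).comp hw

lemma updateFinset_apply_of_mem {z : Fin n → ℝ} {A : Finset (Fin n)} {y : ↥A → ℝ}
    {i : Fin n} (hi : i ∈ A) : updateFinset z A y i = y ⟨i, hi⟩ := dif_pos hi

lemma updateFinset_apply_of_not_mem {z : Fin n → ℝ} {A : Finset (Fin n)} {y : ↥A → ℝ}
    {i : Fin n} (hi : i ∉ A) : updateFinset z A y i = z i := dif_neg hi

lemma box_insert {x x' : Fin n → ℝ} (z : Fin n → ℝ)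
    (hz : ∀ i, z i ∈ Set.Icc (x i) (x' i))
    {j : Fin n} {S : Finset (Fin n)} (hj : j ∉ S)
    {f : (Fin n → ℝ) → ℝ}
    (hf : ContinuousOn f (Set.univ.pi fun i => Set.Icc (x i) (x' i))) :
    IntegrableOn (fun t => ∫ η in Set.univ.pi fun i : ↥S => Set.Icc (x i) (x' i),
        f (updateFinset (Function.update z j t) S η)) (Set.Icc (x j) (x' j)) ∧
    ∫ t in Set.Icc (x j) (x' j), ∫ η in Set.univ.pi fun i : ↥S => Set.Icc (x i) (x' i),
        f (updateFinset (Function.update z j t) S η)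
      = ∫ ζ in Set.univ.pi fun i : ↥(({j} : Finset (Fin n)) ∪ S) => Set.Icc (x i) (x' i),
          f (updateFinset z ({j} ∪ S) ζ) := by
  have hd : Disjoint ({j} : Finset (Fin n)) S := by simpa using hj
  set e := MeasurableEquiv.piFinsetUnion (fun _ : Fin n => ℝ) hd with he
  have hep : MeasurePreserving e volume volume := volume_preserving_piFinsetUnion _ hd
  have hecoord : ∀ p : (↥({j} : Finset (Fin n)) → ℝ) × (↥S → ℝ),
      updateFinset z ({j} ∪ S) (e p) = updateFinset (updateFinset z {j} p.1) S p.2 := by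
    rintro ⟨a, b⟩
    exact (updateFinset_updateFinset hd).symm
  set eu := MeasurableEquiv.piUnique (fun _ : ↥({j} : Finset (Fin n)) => ℝ) with heudef
  have hup : MeasurePreserving eu volume volume := volume_preserving_piUnique _
  have heval : ∀ a : ↥({j} : Finset (Fin n)) → ℝ, eu a = a default := fun a => rfl
  have hdval : ((default : ↥({j} : Finset (Fin n))) : Fin n) = j :=
    Finset.mem_singleton.mp (default : ↥({j} : Finset (Fin n))).2
  have hsingle : ∀ a : ↥({j} : Finset (Fin n)) → ℝ,
      updateFinset z {j} a = Function.update z j (eu a) := by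
    intro a
    rw [updateFinset_singleton, heval]
    exact congrArg (Function.update z j) (congrArg a (Subsingleton.elim _ _))
  have hpreu : eu ⁻¹' Set.Icc (x j) (x' j)
      = Set.univ.pi fun i : ↥({j} : Finset (Fin n)) => Set.Icc (x i) (x' i) := by
    ext a
    simp only [Set.mem_preimage, Set.mem_univ_pi, heval]
    constructor
    · intro h i
      have hi : i = default := Subsingleton.elim _ _
      subst hi
      rw [hdval]
      exact h
    · intro h
      have h2 := h default
      rwa [hdval] at h2
  have hpre : e ⁻¹' (Set.univ.pi fun i : ↥(({j} : Finset (Fin n)) ∪ S) => Set.Icc (x i) (x' i))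
      = (Set.univ.pi fun i : ↥({j} : Finset (Fin n)) => Set.Icc (x i) (x' i)) ×ˢ
        (Set.univ.pi fun i : ↥S => Set.Icc (x i) (x' i)) := by
    ext p
    simp only [Set.mem_preimage, Set.mem_univ_pi, Set.mem_prod]
    constructor
    · intro h
      have hall : ∀ i : Fin n, updateFinset (updateFinset z {j} p.1) S p.2 i
          ∈ Set.Icc (x i) (x' i) := by
        intro i
        rw [← hecoord p]
        by_cases hiu : i ∈ ({j} : Finset (Fin n)) ∪ S
        · rw [updateFinset_apply_of_mem hiu]
          exact h ⟨i, hiu⟩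
        · rw [updateFinset_apply_of_not_mem hiu]
          exact hz i
      constructor
      · intro i
        have his : (i : Fin n) ∉ S := fun hh => Finset.disjoint_left.mp hd i.2 hh
        have := hall i
        rwa [updateFinset_apply_of_not_mem his, updateFinset_apply_of_mem i.2] at this
      · intro i
        have := hall i
        rwa [updateFinset_apply_of_mem i.2] at this
    · rintro ⟨h1, h2⟩ i
      have hco := congrFun (hecoord p) (i : Fin n)
      rw [updateFinset_apply_of_mem i.2] at hco
      rw [hco]
      by_cases hiS : (i : Fin n) ∈ S
      · rw [updateFinset_apply_of_mem hiS]
        exact h2 ⟨i, hiS⟩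
      · have hij : (i : Fin n) ∈ ({j} : Finset (Fin n)) := by
          rcases Finset.mem_union.mp i.2 with h | h
          · exact h
          · exact absurd h hiS
        rw [updateFinset_apply_of_not_mem hiS, updateFinset_apply_of_mem hij]
        exact h1 ⟨i, hij⟩
  -- integrability on the product
  have hIprod : IntegrableOn (fun p : (↥({j} : Finset (Fin n)) → ℝ) × (↥S → ℝ) =>
        f (updateFinset (updateFinset z {j} p.1) S p.2))
      ((Set.univ.pi fun i : ↥({j} : Finset (Fin n)) => Set.Icc (x i) (x' i)) ×ˢ
        (Set.univ.pi fun i : ↥S => Set.Icc (x i) (x' i))) := by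
    refine ContinuousOn.integrableOn_compact
      ((isCompact_univ_pi fun i => isCompact_Icc).prod
        (isCompact_univ_pi fun i => isCompact_Icc)) ?_
    refine hf.comp (continuous_updateFinset_comp
      (continuous_updateFinset_comp continuous_const continuous_fst)
      continuous_snd).continuousOn ?_
    intro p hp
    refine Set.mem_univ_pi.mpr fun i => ?_
    exact updateFinset_mem_pi (fun i' => updateFinset_mem_pi hz hp.1 i') hp.2 i
  have hIprod' : Integrable (fun p : (↥({j} : Finset (Fin n)) → ℝ) × (↥S → ℝ) =>
        f (updateFinset (updateFinset z {j} p.1) S p.2))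
      ((volume.restrict (Set.univ.pi fun i : ↥({j} : Finset (Fin n)) =>
          Set.Icc (x i) (x' i))).prod
        (volume.restrict (Set.univ.pi fun i : ↥S => Set.Icc (x i) (x' i)))) := by
    rw [Measure.prod_restrict]
    exact hIprod
  have hIa0 : IntegrableOn (fun a : ↥({j} : Finset (Fin n)) → ℝ =>
      ∫ b in Set.univ.pi fun i : ↥S => Set.Icc (x i) (x' i),
        f (updateFinset (updateFinset z {j} a) S b))
      (Set.univ.pi fun i : ↥({j} : Finset (Fin n)) => Set.Icc (x i) (x' i)) :=
    hIprod'.integral_prod_left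
  constructor
  · -- integrability in t
    rw [← (hup.integrableOn_comp_preimage eu.measurableEmbedding
      (f := fun t => ∫ η in Set.univ.pi fun i : ↥S => Set.Icc (x i) (x' i),
        f (updateFinset (Function.update z j t) S η))
      (s := Set.Icc (x j) (x' j))), hpreu]
    have : (fun a : ↥({j} : Finset (Fin n)) → ℝ =>
        ∫ b in Set.univ.pi fun i : ↥S => Set.Icc (x i) (x' i),
          f (updateFinset (updateFinset z {j} a) S b))
        = (fun t => ∫ η in Set.univ.pi fun i : ↥S => Set.Icc (x i) (x' i),
          f (updateFinset (Function.update z j t) S η)) ∘ eu := by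
      funext a
      simp only [Function.comp_apply, hsingle]
    rwa [this] at hIa0
  · calc
      ∫ t in Set.Icc (x j) (x' j), ∫ η in Set.univ.pi fun i : ↥S => Set.Icc (x i) (x' i),
          f (updateFinset (Function.update z j t) S η)
        = ∫ a in eu ⁻¹' Set.Icc (x j) (x' j),
            ∫ η in Set.univ.pi fun i : ↥S => Set.Icc (x i) (x' i),
              f (updateFinset (Function.update z j (eu a)) S η) :=
          (hup.setIntegral_preimage_emb eu.measurableEmbedding _ _).symm
      _ = ∫ a in Set.univ.pi fun i : ↥({j} : Finset (Fin n)) => Set.Icc (x i) (x' i),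
            ∫ b in Set.univ.pi fun i : ↥S => Set.Icc (x i) (x' i),
              f (updateFinset (updateFinset z {j} a) S b) := by
          rw [hpreu]
          simp only [hsingle]
      _ = ∫ p in (Set.univ.pi fun i : ↥({j} : Finset (Fin n)) => Set.Icc (x i) (x' i)) ×ˢ
            (Set.univ.pi fun i : ↥S => Set.Icc (x i) (x' i)),
            f (updateFinset (updateFinset z {j} p.1) S p.2) := by
          rw [Measure.volume_eq_prod]
          have hIprod2 : IntegrableOn (fun p : (↥({j} : Finset (Fin n)) → ℝ) × (↥S → ℝ) =>
                f (updateFinset (updateFinset z {j} p.1) S p.2))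
              ((Set.univ.pi fun i : ↥({j} : Finset (Fin n)) => Set.Icc (x i) (x' i)) ×ˢ
                (Set.univ.pi fun i : ↥S => Set.Icc (x i) (x' i)))
              ((volume : Measure (↥({j} : Finset (Fin n)) → ℝ)).prod
                (volume : Measure (↥S → ℝ))) := by
            rw [← Measure.volume_eq_prod]
            exact hIprod
          exact (setIntegral_prod _ hIprod2).symm
      _ = ∫ p in e ⁻¹' (Set.univ.pi fun i : ↥(({j} : Finset (Fin n)) ∪ S) =>
            Set.Icc (x i) (x' i)),
            f (updateFinset z ({j} ∪ S) (e p)) := by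
          rw [hpre]
          simp only [hecoord]
      _ = ∫ ζ in Set.univ.pi fun i : ↥(({j} : Finset (Fin n)) ∪ S) => Set.Icc (x i) (x' i),
            f (updateFinset z ({j} ∪ S) ζ) :=
          hep.setIntegral_preimage_emb e.measurableEmbedding
            (fun ζ => f (updateFinset z ({j} ∪ S) ζ)) _

lemma newton_aux {x x' : Fin n → ℝ} (hxx : ∀ i, x i < x' i)
    {U : Set (Fin n → ℝ)} (hPU : Set.univ.pi (fun i => Set.Icc (x i) (x' i)) ⊆ U)
    (D : Finset (Fin n) → (Fin n → ℝ) → ℝ)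
    (hDderiv : ∀ (S : Finset (Fin n)) (i : Fin n), i ∉ S → ∀ η ∈ U,
      HasDerivAt (fun t => D S (Function.update η i t)) (D (insert i S) η) (η i))
    (hDcont : ∀ S, ContinuousOn (D S) U) :
    ∀ T S₀ : Finset (Fin n), Disjoint S₀ T → ∀ z : Fin n → ℝ,
      (∀ i, z i ∈ Set.Icc (x i) (x' i)) → (∀ i ∈ T, z i = x i) →
      D S₀ (fun i => if i ∈ T then x' i else z i) - D S₀ z
        = ∑ S ∈ T.powerset.filter (· ≠ ∅),
            ∫ η in Set.univ.pi fun i : ↥S => Set.Icc (x i) (x' i),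
              D (S₀ ∪ S) (updateFinset z S η) := by
  intro T
  induction T using Finset.induction_on with
  | empty =>
    intro S₀ _ z hz _
    simp [Finset.powerset_empty, Finset.filter_singleton]
  | @insert j T' hjT' IH =>
    intro S₀ hdisj z hz hzx
    have hjI : j ∈ insert j T' := mem_insert_self j T'
    have hjS₀ : j ∉ S₀ := fun h => (Finset.disjoint_left.mp hdisj h) hjI
    have hS₀T' : Disjoint S₀ T' := hdisj.mono_right (Finset.subset_insert j T')
    have hdisj' : Disjoint (insert j S₀) T' :=
      Finset.disjoint_insert_left.mpr ⟨hjT', hS₀T'⟩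
    set w : Fin n → ℝ := fun i => if i ∈ T' then x' i else z i with hw
    have hwz : ∀ i, w i ∈ Set.Icc (x i) (x' i) := by
      intro i
      simp only [hw]
      split
      · exact ⟨(hxx i).le, le_refl _⟩
      · exact hz i
    have hwj : w j = x j := by
      simp only [hw, if_neg hjT']
      exact hzx j hjI
    have hcorner : (fun i => if i ∈ insert j T' then x' i else z i)
        = Function.update w j (x' j) := by
      funext i
      rcases eq_or_ne i j with rfl | hij
      · simp [hw, hjT']
      · simp [hw, Function.update_of_ne hij, Finset.mem_insert, hij]
    have hupd_mem : ∀ t ∈ Set.Icc (x j) (x' j),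
        Function.update w j t ∈ Set.univ.pi fun i => Set.Icc (x i) (x' i) := by
      intro t ht
      refine Set.mem_univ_pi.mpr fun i => ?_
      rcases eq_or_ne i j with rfl | hij
      · simpa using ht
      · rw [Function.update_of_ne hij]
        exact hwz i
    have hderiv : ∀ t ∈ Set.uIcc (x j) (x' j),
        HasDerivAt (fun s => D S₀ (Function.update w j s))
          (D (insert j S₀) (Function.update w j t)) t := by
      intro t ht
      rw [Set.uIcc_of_le (hxx j).le] at ht
      have hmem : Function.update w j t ∈ U := hPU (hupd_mem t ht)
      have h := hDderiv S₀ j hjS₀ _ hmem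
      rw [Function.update_self] at h
      simpa [Function.update_idem] using h
    have hcont_upd : Continuous fun t : ℝ => Function.update w j t := by
      refine continuous_pi fun i => ?_
      rcases eq_or_ne i j with rfl | hij
      · simpa [Function.update_self] using continuous_id'
      · simpa [Function.update_of_ne hij] using (continuous_const : Continuous fun _ : ℝ => w i)
    have hcontD : ContinuousOn (fun t => D (insert j S₀) (Function.update w j t))
        (Set.uIcc (x j) (x' j)) := by
      rw [Set.uIcc_of_le (hxx j).le]
      exact (hDcont _).comp hcont_upd.continuousOn fun t ht => hPU (hupd_mem t ht)
    have hftc := intervalIntegral.integral_eq_sub_of_hasDerivAt hderiv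
      hcontD.intervalIntegrable
    have hwx : Function.update w j (x j) = w := by
      rw [← hwj]
      exact Function.update_eq_self j w
    rw [hwx] at hftc
    -- the empty-face integral is trivial
    have hempty : ∀ (g : Fin n → ℝ) (S' : Finset (Fin n)),
        (∫ η : ↥(∅ : Finset (Fin n)) → ℝ in
            Set.univ.pi fun i : ↥(∅ : Finset (Fin n)) => Set.Icc (x i) (x' i),
          D S' (updateFinset g ∅ η)) = D S' g := by
      intro g S'
      have h1 : (Set.univ.pi fun i : ↥(∅ : Finset (Fin n)) => Set.Icc (x i) (x' i))
          = Set.univ := by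
        ext y
        simp
      have h2 : (volume : Measure (↥(∅ : Finset (Fin n)) → ℝ)) Set.univ = 1 := by
        rw [volume_pi, Measure.pi_univ]
        simp
      simp only [updateFinset_empty, h1, Measure.restrict_univ, integral_const, h2]
      simp [measureReal_def, h2]
    have hpoint : ∀ t ∈ Set.Icc (x j) (x' j),
        D (insert j S₀) (Function.update w j t)
          = ∑ S ∈ T'.powerset,
              ∫ η in Set.univ.pi fun i : ↥S => Set.Icc (x i) (x' i),
                D (insert j S₀ ∪ S) (updateFinset (Function.update z j t) S η) := by
      intro t ht
      have hz' : ∀ i, Function.update z j t i ∈ Set.Icc (x i) (x' i) := by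
        intro i
        rcases eq_or_ne i j with rfl | hij
        · simpa using ht
        · rw [Function.update_of_ne hij]
          exact hz i
      have hzx' : ∀ i ∈ T', Function.update z j t i = x i := by
        intro i hi
        have hij : i ≠ j := by
          rintro rfl
          exact hjT' hi
        rw [Function.update_of_ne hij]
        exact hzx i (mem_insert_of_mem hi)
      have hIH := IH (insert j S₀) hdisj' (Function.update z j t) hz' hzx'
      have hcorner' : (fun i => if i ∈ T' then x' i else Function.update z j t i)
          = Function.update w j t := by
        funext i
        rcases eq_or_ne i j with rfl | hij
        · simp [hjT', Function.update_self]
        · simp [Function.update_of_ne hij, hw]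
      rw [hcorner'] at hIH
      have hps : ∑ S ∈ T'.powerset,
            (∫ η in Set.univ.pi fun i : ↥S => Set.Icc (x i) (x' i),
              D (insert j S₀ ∪ S) (updateFinset (Function.update z j t) S η))
          = D (insert j S₀) (Function.update z j t)
            + ∑ S ∈ T'.powerset.filter (· ≠ ∅),
                ∫ η in Set.univ.pi fun i : ↥S => Set.Icc (x i) (x' i),
                  D (insert j S₀ ∪ S) (updateFinset (Function.update z j t) S η) := by
        rw [← Finset.sum_filter_add_sum_filter_not T'.powerset (· = ∅)]
        congr 1
        · rw [Finset.filter_eq', if_pos (Finset.empty_mem_powerset T'), Finset.sum_singleton]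
          simpa [Finset.union_empty] using hempty (Function.update z j t) (insert j S₀)
      rw [hps]
      linarith [hIH]
    -- integrate hpoint over [x j, x' j]
    have hbox : ∀ S ∈ T'.powerset,
        (IntegrableOn (fun t => ∫ η in Set.univ.pi fun i : ↥S => Set.Icc (x i) (x' i),
            D (insert j S₀ ∪ S) (updateFinset (Function.update z j t) S η))
          (Set.Icc (x j) (x' j)) ∧
        ∫ t in Set.Icc (x j) (x' j),
            ∫ η in Set.univ.pi fun i : ↥S => Set.Icc (x i) (x' i),
              D (insert j S₀ ∪ S) (updateFinset (Function.update z j t) S η)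
          = ∫ ζ in Set.univ.pi fun i : ↥(({j} : Finset (Fin n)) ∪ S) => Set.Icc (x i) (x' i),
              D (insert j S₀ ∪ S) (updateFinset z ({j} ∪ S) ζ)) := by
      intro S hS
      have hjS : j ∉ S := fun h => hjT' (Finset.mem_powerset.mp hS h)
      exact box_insert z hz hjS ((hDcont _).mono hPU)
    have hbracket : D S₀ (Function.update w j (x' j)) - D S₀ w
        = ∑ S ∈ T'.powerset,
            ∫ ζ in Set.univ.pi fun i : ↥(({j} : Finset (Fin n)) ∪ S) => Set.Icc (x i) (x' i),
              D (insert j S₀ ∪ S) (updateFinset z ({j} ∪ S) ζ) := by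
      rw [← hftc, intervalIntegral.integral_of_le (hxx j).le,
        ← MeasureTheory.integral_Icc_eq_integral_Ioc]
      rw [setIntegral_congr_fun measurableSet_Icc hpoint]
      rw [integral_finset_sum _ (fun S hS => (hbox S hS).1)]
      exact Finset.sum_congr rfl fun S hS => (hbox S hS).2
    have hsecond := IH S₀ hS₀T' z hz (fun i hi => hzx i (mem_insert_of_mem hi))
    -- reindex the sum over the powerset of `insert j T'`
    have hdd : Disjoint (T'.powerset.filter (· ≠ ∅))
        ((T'.powerset.image (insert j)).filter (· ≠ ∅)) := by
      rw [Finset.disjoint_left]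
      intro S hS1 hS2
      have h1 : j ∉ S := fun h =>
        hjT' (Finset.mem_powerset.mp (Finset.mem_filter.mp hS1).1 h)
      obtain ⟨A, _, rfl⟩ := Finset.mem_image.mp (Finset.mem_filter.mp hS2).1
      exact h1 (mem_insert_self j A)
    have hre : ∑ S ∈ (insert j T').powerset.filter (· ≠ ∅),
          (∫ η in Set.univ.pi fun i : ↥S => Set.Icc (x i) (x' i),
            D (S₀ ∪ S) (updateFinset z S η))
        = (∑ S ∈ T'.powerset.filter (· ≠ ∅),
            ∫ η in Set.univ.pi fun i : ↥S => Set.Icc (x i) (x' i),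
              D (S₀ ∪ S) (updateFinset z S η))
          + ∑ S ∈ T'.powerset,
              ∫ ζ in Set.univ.pi fun i : ↥(({j} : Finset (Fin n)) ∪ S) => Set.Icc (x i) (x' i),
                D (S₀ ∪ ({j} ∪ S)) (updateFinset z ({j} ∪ S) ζ) := by
      rw [Finset.powerset_insert, Finset.filter_union, Finset.sum_union hdd]
      congr 1
      have himg : (T'.powerset.image (insert j)).filter (· ≠ ∅)
          = T'.powerset.image (insert j) :=
        Finset.filter_true_of_mem fun S hS => by
          obtain ⟨A, _, rfl⟩ := Finset.mem_image.mp hS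
          exact Finset.insert_ne_empty j A
      rw [himg, Finset.sum_image (fun A hA B hB hAB => by
        have hjA : j ∉ A := fun h => hjT' (Finset.mem_powerset.mp hA h)
        have hjB : j ∉ B := fun h => hjT' (Finset.mem_powerset.mp hB h)
        rw [← Finset.erase_insert hjA, hAB, Finset.erase_insert hjB])]
      refine Finset.sum_congr rfl fun S hS => ?_
      rw [Finset.insert_eq]
    have hunion : ∀ S : Finset (Fin n), insert j S₀ ∪ S = S₀ ∪ ({j} ∪ S) := by
      intro S
      ext a
      simp [Finset.mem_insert, Finset.mem_union]
    rw [hcorner, hre, ← hsecond]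
    have : ∑ S ∈ T'.powerset,
          (∫ ζ in Set.univ.pi fun i : ↥(({j} : Finset (Fin n)) ∪ S) => Set.Icc (x i) (x' i),
            D (S₀ ∪ ({j} ∪ S)) (updateFinset z ({j} ∪ S) ζ))
        = D S₀ (Function.update w j (x' j)) - D S₀ w := by
      rw [hbracket]
      exact Finset.sum_congr rfl fun S hS => by rw [hunion S]
    rw [this]
    ring

end NLAux

/-- **Generalized Newton–Leibniz formula.** Let `x_i < x_i'` for all `i` and let
`P = Π_i [x_i, x_i']`. Suppose `u` is Cⁿ on an open neighborhood `U` of `P`; the family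
`D` encodes all mixed partials with distinct indices: `D ∅ = u` and `D (insert i S)` is
the partial derivative of `D S` in the direction `i`, each `D S` being continuous on `U`.
Then `u(x') − u(x) = Σ_{∅ ≠ S ⊆ {1,...,n}} ∫_{P_S} ∂^|S| u/∂x_S`, the sum of the face
integrals over all `2ⁿ − 1` faces of `P` containing the bottom corner `x`. -/


theorem generalized_newton_leibniz {n : ℕ}
    (x x' : Fin n → ℝ) (hxx : ∀ i, x i < x' i)
    (U : Set (Fin n → ℝ)) (hU : IsOpen U)
    (hPU : Set.univ.pi (fun i => Set.Icc (x i) (x' i)) ⊆ U)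
    (u : (Fin n → ℝ) → ℝ)
    (D : Finset (Fin n) → (Fin n → ℝ) → ℝ)
    (hD0 : D ∅ = u)
    (hDderiv : ∀ (S : Finset (Fin n)) (i : Fin n), i ∉ S → ∀ η ∈ U,
      HasDerivAt (fun t => D S (Function.update η i t)) (D (insert i S) η) (η i))
    (hDcont : ∀ S, ContinuousOn (D S) U) :
    u x' - u x =
      ∑ S ∈ Finset.univ.filter (fun S : Finset (Fin n) => S ≠ ∅),
        faceIntegral x x' D S := by
  have h := newton_aux hxx hPU D hDderiv hDcont Finset.univ ∅
    (Finset.disjoint_left.mpr (by simp)) x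
    (fun i => ⟨le_refl _, (hxx i).le⟩) (fun i _ => rfl)
  have hx' : (fun i => if i ∈ (Finset.univ : Finset (Fin n)) then x' i else x i) = x' := by
    funext i
    simp
  rw [hx', hD0, Finset.powerset_univ] at h
  rw [h]
  refine Finset.sum_congr rfl fun S _ => ?_
  simp only [faceIntegral, Finset.empty_union]
  rfl
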